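/- Fix n ≥ 2 and p ∈ (0,1). Let G⃗(n,p) be the random digraph on [n] in which each ordered pair (i,j) with i ≠ j is an edge independently with probability p, and let Y be the number of permutations π ∈ 𝔖_n such that (π_i, π_{i+1}) is an edge for every i ∈ [n-1]. Then 𝔼[Y²] ≤ exp(1/p − 1) · (𝔼[Y])²; more precisely, 𝔼[Y²] = (𝔼[Y])² · 𝔼[p^{−Z}], where Z = |E(π) ∩ E(σ)| for two independent uniformly random permutations π, σ of [n] and E(π) = {(π_i, π_{i+1}) : 1 ≤ i ≤ n−1}, and 𝔼[p^{−Z}] ≤ exp(1/p − 1). -/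

import Mathlib

set_option linter.unusedSectionVars false

section ListLemmas

variable {α : Type*} [DecidableEq α]

theorem nodup_decomp {u v : List α} {a b : α} (h : (u ++ a :: b :: v).Nodup) :
    a ∉ u ∧ b ∉ u ∧ a ≠ b ∧ a ∉ v ∧ b ∉ v := by
  simp [List.nodup_append, List.disjoint_cons_right] at h
  exact ⟨fun ha => (h.2.2 a ha).1 rfl, fun hb => (h.2.2 b hb).2.1 rfl, h.2.1.1.1, h.2.1.1.2,
    h.2.1.2.1⟩

/-- unique splitting at an element not in either prefix -/
theorem split_unique {b : α} : ∀ {p1 p2 r1 r2 : List α},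
    p1 ++ b :: r1 = p2 ++ b :: r2 → b ∉ p1 → b ∉ p2 → p1 = p2 ∧ r1 = r2
  | [], [], r1, r2, h, _, _ => by simpa using h
  | [], x :: p2, r1, r2, h, h1, h2 => by
      simp at h
      exact absurd (h.1 ▸ List.mem_cons_self) h2
  | x :: p1, [], r1, r2, h, h1, h2 => by
      simp at h
      exact absurd (h.1 ▸ List.mem_cons_self) h1
  | x :: p1, y :: p2, r1, r2, h, h1, h2 => by
      simp only [List.cons_append, List.cons.injEq] at h
      obtain ⟨rfl, h⟩ := h
      have := split_unique h (fun hb => h1 (List.mem_cons_of_mem _ hb))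
        (fun hb => h2 (List.mem_cons_of_mem _ hb))
      exact ⟨by rw [this.1], this.2⟩

def Adj (a b : α) (L : List α) : Prop := [a, b] <:+: L

instance (a b : α) (L : List α) : Decidable (Adj a b L) := by unfold Adj; infer_instance

theorem adj_iff {a b : α} {L : List α} : Adj a b L ↔ ∃ u v, L = u ++ a :: b :: v := by
  constructor
  · rintro ⟨u, v, h⟩; exact ⟨u, v, by simpa using h.symm⟩
  · rintro ⟨u, v, h⟩; exact ⟨u, v, by simpa using h.symm⟩

theorem adj_ne {a b : α} {L : List α} (hL : L.Nodup) (h : Adj a b L) : a ≠ b := by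
  obtain ⟨u, v, rfl⟩ := adj_iff.mp h
  exact (nodup_decomp hL).2.2.1

theorem adj_mem_right {a b : α} {L : List α} (h : Adj a b L) : b ∈ L := by
  obtain ⟨u, v, rfl⟩ := adj_iff.mp h; simp

theorem adj_mem_left {a b : α} {L : List α} (h : Adj a b L) : a ∈ L := by
  obtain ⟨u, v, rfl⟩ := adj_iff.mp h; simp

/-- successors are unique in a nodup list -/
theorem adj_succ_unique {a b c : α} {L : List α} (hL : L.Nodup) (h1 : Adj a b L)
    (h2 : Adj a c L) : b = c := by
  obtain ⟨u1, v1, rfl⟩ := adj_iff.mp h1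
  obtain ⟨u2, v2, he⟩ := adj_iff.mp h2
  have ha1 : a ∉ u1 := (nodup_decomp hL).1
  have ha2 : a ∉ u2 := (nodup_decomp (he ▸ hL)).1
  obtain ⟨-, h4⟩ := split_unique he ha1 ha2
  simp only [List.cons.injEq] at h4
  exact h4.1

/-- predecessors are unique in a nodup list -/
theorem adj_pred_unique {a b c : α} {L : List α} (hL : L.Nodup) (h1 : Adj a c L)
    (h2 : Adj b c L) : a = b := by
  obtain ⟨u1, v1, rfl⟩ := adj_iff.mp h1
  obtain ⟨u2, v2, he⟩ := adj_iff.mp h2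
  have d1 := nodup_decomp hL
  have d2 := nodup_decomp (he ▸ hL)
  have hc1 : c ∉ u1 ++ [a] := by
    simp only [List.mem_append, List.mem_singleton]
    rintro (h | rfl)
    · exact d1.2.1 h
    · exact d1.2.2.1 rfl
  have hc2 : c ∉ u2 ++ [b] := by
    simp only [List.mem_append, List.mem_singleton]
    rintro (h | rfl)
    · exact d2.2.1 h
    · exact d2.2.2.1 rfl
  have he' : (u1 ++ [a]) ++ c :: v1 = (u2 ++ [b]) ++ c :: v2 := by
    simpa using he
  obtain ⟨h3, -⟩ := split_unique he' hc1 hc2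
  have := congrArg (fun l => l.getLast?) h3
  simpa using this

/-- erasing the middle element -/
theorem erase_middle {u v : List α} {a b : α} (hbu : b ∉ u) (hab : a ≠ b) :
    (u ++ a :: b :: v).erase b = u ++ a :: v := by
  have : b ∉ u ++ [a] := by
    simp only [List.mem_append, List.mem_singleton]
    rintro (h | rfl)
    · exact hbu h
    · exact hab rfl
  calc (u ++ a :: b :: v).erase b = ((u ++ [a]) ++ b :: v).erase b := by simp
    _ = (u ++ [a]) ++ (b :: v).erase b := List.erase_append_right _ this
    _ = u ++ a :: v := by simp

/-- adjacency is preserved by erasing an unrelated element -/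
theorem adj_erase {x y b : α} {L : List α} (hL : L.Nodup) (h : Adj x y L)
    (hx : x ≠ b) (hy : y ≠ b) : Adj x y (L.erase b) := by
  obtain ⟨u, v, rfl⟩ := adj_iff.mp h
  by_cases hbu : b ∈ u
  · rw [List.erase_append_left _ hbu]
    exact adj_iff.mpr ⟨u.erase b, v, rfl⟩
  · by_cases hbv : b ∈ v
    · have : (u ++ x :: y :: v).erase b = u ++ x :: y :: v.erase b := by
        have hb : b ∉ u ++ [x, y] := by
          simp only [List.mem_append, List.mem_cons, List.mem_singleton]
          rintro (h | rfl | (rfl | h))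
          · exact hbu h
          · exact hx rfl
          · exact hy rfl
          · simp at h
        calc (u ++ x :: y :: v).erase b = ((u ++ [x, y]) ++ v).erase b := by simp
          _ = (u ++ [x, y]) ++ v.erase b := List.erase_append_right _ hb
          _ = u ++ x :: y :: v.erase b := by simp
      rw [this]
      exact adj_iff.mpr ⟨u, v.erase b, rfl⟩
    · have : b ∉ u ++ x :: y :: v := by
        simp only [List.mem_append, List.mem_cons]
        rintro (h | rfl | (rfl | h))
        · exact hbu h
        · exact hx rfl
        · exact hy rfl
        · exact hbv h
      rw [List.erase_of_not_mem this]
      exact h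

/-- contracting an adjacent pair preserves adjacency through it -/
theorem adj_contract {a b c : α} {L : List α} (hL : L.Nodup) (h1 : Adj a b L)
    (h2 : Adj b c L) : Adj a c (L.erase b) := by
  obtain ⟨u1, v1, rfl⟩ := adj_iff.mp h1
  obtain ⟨u2, v2, he⟩ := adj_iff.mp h2
  have d1 := nodup_decomp hL
  have d2 := nodup_decomp (he ▸ hL)
  have he' : (u1 ++ [a]) ++ b :: v1 = u2 ++ b :: c :: v2 := by simpa using he
  have hb1 : b ∉ u1 ++ [a] := by
    simp only [List.mem_append, List.mem_singleton]
    rintro (h | rfl)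
    · exact d1.2.1 h
    · exact d1.2.2.1 rfl
  obtain ⟨h3, h4⟩ := split_unique he' hb1 d2.1
  subst h4
  rw [erase_middle d1.2.1 d1.2.2.1]
  exact adj_iff.mpr ⟨u1, v2, by simp⟩

/-- erasing the successor of `a` is injective on nodup lists where `(a,b)` is adjacent -/
theorem adj_erase_inj {a b : α} {L1 L2 : List α} (h1 : L1.Nodup) (h2 : L2.Nodup)
    (ha1 : Adj a b L1) (ha2 : Adj a b L2) (he : L1.erase b = L2.erase b) : L1 = L2 := by
  obtain ⟨u1, v1, rfl⟩ := adj_iff.mp ha1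
  obtain ⟨u2, v2, rfl⟩ := adj_iff.mp ha2
  have d1 := nodup_decomp h1
  have d2 := nodup_decomp h2
  rw [erase_middle d1.2.1 d1.2.2.1, erase_middle d2.2.1 d2.2.2.1] at he
  obtain ⟨h3, h4⟩ := split_unique he d1.1 d2.1
  rw [h3, h4]

end ListLemmas

section CountBound

variable {α : Type*} [DecidableEq α]

/-- Key counting bound: the number of orderings in which every pair from `S` appears
adjacently is at most `(n - |S|)!`. -/
theorem count_bound : ∀ (k : ℕ) (L0 : List α), L0.Nodup → ∀ S : Finset (α × α),
    S.card = k → (∀ e ∈ S, Adj e.1 e.2 L0) →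
    (L0.permutations.toFinset.filter (fun L => ∀ e ∈ S, Adj e.1 e.2 L)).card ≤
      (L0.length - k).factorial
  | 0, L0, hL0, S, hcard, hS => by
      calc (L0.permutations.toFinset.filter _).card ≤ L0.permutations.toFinset.card :=
            Finset.card_filter_le _ _
        _ = L0.permutations.length :=
            List.toFinset_card_of_nodup (List.nodup_permutations _ hL0)
        _ = L0.length.factorial := List.length_permutations _
        _ = (L0.length - 0).factorial := by simp
  | (k + 1), L0, hL0, S, hcard, hS => by
      classical
      obtain ⟨⟨a, b⟩, habS⟩ := Finset.card_pos.mp (by rw [hcard]; exact Nat.succ_pos k)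
      have hab : Adj a b L0 := hS _ habS
      have hbL0 : b ∈ L0 := adj_mem_right hab
      set L0' := L0.erase b with hL0'def
      have hL0' : L0'.Nodup := hL0.erase b
      have hlen : L0'.length = L0.length - 1 := List.length_erase_of_mem hbL0
      -- the erased pair set
      have hsnd : ∀ e ∈ S.erase (a, b), e.2 ≠ b := by
        rintro ⟨x, y⟩ he rfl
        have hx : x = a := adj_pred_unique hL0 (hS _ (Finset.mem_of_mem_erase he)) hab
        exact (Finset.ne_of_mem_erase he) (by rw [hx])
      have hfst : ∀ e ∈ S.erase (a, b), e.1 ≠ a := by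
        rintro ⟨x, y⟩ he rfl
        have hy : y = b := adj_succ_unique hL0 (hS _ (Finset.mem_of_mem_erase he)) hab
        exact (Finset.ne_of_mem_erase he) (by rw [hy])
      set g : α × α → α × α := fun e => if e.1 = b then (a, e.2) else e with hgdef
      set S' : Finset (α × α) := (S.erase (a, b)).image g with hS'def
      have hginj : Set.InjOn g (S.erase (a, b)) := by
        rintro ⟨x1, y1⟩ h1 ⟨x2, y2⟩ h2 heq
        simp only [hgdef] at heq
        by_cases hb1 : x1 = b <;> by_cases hb2 : x2 = b
        · rw [if_pos hb1, if_pos hb2] at heq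
          simp only [Prod.mk.injEq] at heq ⊢
          exact ⟨hb1.trans hb2.symm, heq.2⟩
        · rw [if_pos hb1, if_neg hb2] at heq
          exact absurd (congrArg Prod.fst heq).symm (hfst _ h2)
        · rw [if_neg hb1, if_pos hb2] at heq
          exact absurd (congrArg Prod.fst heq) (hfst _ h1)
        · rwa [if_neg hb1, if_neg hb2] at heq
      have hS'card : S'.card = k := by
        rw [hS'def, Finset.card_image_of_injOn hginj, Finset.card_erase_of_mem habS, hcard]
        omega
      -- adjacency of S' pairs in an erased list
      have hadj' : ∀ (L : List α), L.Nodup → (∀ e ∈ S, Adj e.1 e.2 L) →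
          ∀ e ∈ S', Adj e.1 e.2 (L.erase b) := by
        intro L hLnd hLS e heS'
        rw [hS'def, Finset.mem_image] at heS'
        obtain ⟨e', he'S, rfl⟩ := heS'
        have hadj0 : Adj e'.1 e'.2 L := hLS _ (Finset.mem_of_mem_erase he'S)
        by_cases hb : e'.1 = b
        · simp only [hgdef, hb, if_true, ite_true]
          exact adj_contract hLnd (hLS _ habS) (hb ▸ hadj0)
        · simp only [hgdef, hb, if_false, ite_false]
          exact adj_erase hLnd hadj0 hb (hsnd _ he'S)
      -- the injection
      have hmap : ∀ L ∈ L0.permutations.toFinset.filter (fun L => ∀ e ∈ S, Adj e.1 e.2 L),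
          L.erase b ∈ L0'.permutations.toFinset.filter (fun L => ∀ e ∈ S', Adj e.1 e.2 L) := by
        intro L hL
        simp only [Finset.mem_filter, List.mem_toFinset, List.mem_permutations] at hL
        obtain ⟨hperm, hLS⟩ := hL
        simp only [Finset.mem_filter, List.mem_toFinset, List.mem_permutations]
        exact ⟨hperm.erase b, hadj' L (hperm.nodup_iff.mpr hL0) hLS⟩
      have hinj : Set.InjOn (fun L : List α => L.erase b)
          (L0.permutations.toFinset.filter (fun L => ∀ e ∈ S, Adj e.1 e.2 L)) := by
        intro L1 h1 L2 h2 heq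
        rw [Finset.coe_filter, Set.mem_setOf_eq] at h1 h2
        obtain ⟨h1p, h1S⟩ := h1
        obtain ⟨h2p, h2S⟩ := h2
        rw [List.mem_toFinset, List.mem_permutations] at h1p h2p
        exact adj_erase_inj (h1p.nodup_iff.mpr hL0) (h2p.nodup_iff.mpr hL0)
          (h1S _ habS) (h2S _ habS) heq
      calc (L0.permutations.toFinset.filter (fun L => ∀ e ∈ S, Adj e.1 e.2 L)).card
          ≤ (L0'.permutations.toFinset.filter (fun L => ∀ e ∈ S', Adj e.1 e.2 L)).card :=
            Finset.card_le_card_of_injOn (fun L : List α => L.erase b) hmap hinj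
        _ ≤ (L0'.length - k).factorial := count_bound k L0' hL0' S' hS'card
            (fun e he => hadj' L0 hL0 hS e he)
        _ = (L0.length - (k + 1)).factorial := by rw [hlen]; congr 1; omega

end CountBound

section AdjIndex

variable {α : Type*} [DecidableEq α]

theorem adj_of_getElem {L : List α} {i : ℕ} (h : i + 1 < L.length) :
    Adj (L[i]'(by omega)) (L[i+1]'h) L := by
  refine adj_iff.mpr ⟨L.take i, L.drop (i + 2), ?_⟩
  conv_lhs => rw [← List.take_append_drop i L]
  congr 1
  rw [List.drop_eq_getElem_cons (by omega : i < L.length), List.drop_eq_getElem_cons h]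

theorem adj_iff_getElem {x y : α} {L : List α} :
    Adj x y L ↔ ∃ i : ℕ, ∃ h : i + 1 < L.length, L[i]'(by omega) = x ∧ L[i+1]'h = y := by
  constructor
  · intro h
    obtain ⟨u, v, rfl⟩ := adj_iff.mp h
    refine ⟨u.length, by simp, ?_, ?_⟩
    · rw [List.getElem_append_right (le_refl u.length)]
      simp
    · rw [List.getElem_append_right (by omega : u.length ≤ u.length + 1)]
      simp
  · rintro ⟨i, h, rfl, rfl⟩
    exact adj_of_getElem h

end AdjIndex

open MeasureTheory

/-- Directed edges on vertex set `Fin n`: ordered pairs of distinct vertices. -/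
abbrev DEdge (n : ℕ) := {e : Fin n × Fin n // e.1 ≠ e.2}

/-- The `i`-th consecutive directed edge `(π_i, π_{i+1})` (for `1 ≤ i ≤ n-1`) traced out by a
permutation `π` of `Fin n` in one-line notation. -/
def pathEdge (n : ℕ) (π : Equiv.Perm (Fin n)) (i : Fin (n - 1)) : DEdge n :=
  ⟨(π ⟨i.1, by have := i.isLt; omega⟩, π ⟨i.1 + 1, by have := i.isLt; omega⟩), by
    intro h
    have h3 : i.1 = i.1 + 1 := congrArg Fin.val (π.injective h)
    omega⟩

/-- The random digraph `G⃗(n,p)`: the product Bernoulli(`p`) measure on assignments of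
presence/absence to each of the `n(n−1)` possible directed edges on `[n]`. -/
noncomputable def digraphMeasure (n : ℕ) (p : ENNReal) (hp : p ≤ 1) :
    Measure (DEdge n → Bool) :=
  Measure.pi (fun _ => (PMF.bernoulli p.toNNReal
    (by simpa using ENNReal.toNNReal_mono ENNReal.one_ne_top hp)).toMeasure)

/-- `hamY n ω` is the number of Hamiltonian paths of the digraph `ω`: permutations
`π ∈ 𝔖_n` all of whose consecutive pairs `(π_i, π_{i+1})`, `1 ≤ i ≤ n−1`, are edges. -/
noncomputable def hamY (n : ℕ) (ω : DEdge n → Bool) : ℕ :=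
  (Finset.univ.filter (fun π : Equiv.Perm (Fin n) =>
    ∀ i : Fin (n - 1), ω (pathEdge n π i) = true)).card

/-- The set `E(π) = {(π_i, π_{i+1}) : 1 ≤ i ≤ n−1}` of consecutive directed edges of a
permutation `π` of `Fin n` in one-line notation. -/
def edgeFinset (n : ℕ) (π : Equiv.Perm (Fin n)) : Finset (Fin n × Fin n) :=
  Finset.image (fun i : Fin (n - 1) =>
    (π ⟨i.1, by have := i.isLt; omega⟩, π ⟨i.1 + 1, by have := i.isLt; omega⟩)) Finset.univ


section PermEdge

variable {n : ℕ}

theorem mem_edgeFinset_iff (σ : Equiv.Perm (Fin n)) (x y : Fin n) :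
    (x, y) ∈ edgeFinset n σ ↔ Adj x y (List.ofFn ⇑σ) := by
  simp only [edgeFinset, Finset.mem_image, Finset.mem_univ, true_and]
  constructor
  · rintro ⟨i, hi⟩
    rw [Prod.mk.injEq] at hi
    have hlen : i.1 + 1 < (List.ofFn ⇑σ).length := by
      have := i.isLt; simp only [List.length_ofFn]; omega
    have h := adj_of_getElem hlen
    rw [List.getElem_ofFn, List.getElem_ofFn] at h
    rw [← hi.1, ← hi.2]
    exact h
  · intro h
    obtain ⟨i, hlen, hx, hy⟩ := adj_iff_getElem.mp h
    rw [List.length_ofFn] at hlen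
    refine ⟨⟨i, by omega⟩, ?_⟩
    rw [Prod.mk.injEq]
    exact ⟨(List.getElem_ofFn _).symm.trans hx, (List.getElem_ofFn _).symm.trans hy⟩

theorem ofFn_perm_nodup (σ : Equiv.Perm (Fin n)) : (List.ofFn ⇑σ).Nodup :=
  List.nodup_ofFn.mpr σ.injective

theorem ofFn_perm_toFinset (σ : Equiv.Perm (Fin n)) : (List.ofFn ⇑σ).toFinset = Finset.univ := by
  ext a
  simp only [List.mem_toFinset, List.mem_ofFn, Finset.mem_univ, iff_true]
  exact ⟨σ.symm a, σ.apply_symm_apply a⟩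

theorem ofFn_perm_perm (σ π : Equiv.Perm (Fin n)) : (List.ofFn ⇑σ).Perm (List.ofFn ⇑π) :=
  List.perm_of_nodup_nodup_toFinset_eq (ofFn_perm_nodup σ) (ofFn_perm_nodup π)
    ((ofFn_perm_toFinset σ).trans (ofFn_perm_toFinset π).symm)

/-- the number of permutations whose edge set contains `S` is at most `(n - |S|)!` -/
theorem count_perm_bound (π : Equiv.Perm (Fin n)) (S : Finset (Fin n × Fin n))
    (hS : S ⊆ edgeFinset n π) :
    (Finset.univ.filter (fun σ : Equiv.Perm (Fin n) => S ⊆ edgeFinset n σ)).card ≤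
      (n - S.card).factorial := by
  classical
  set L0 := List.ofFn ⇑π with hL0def
  have hadjS : ∀ e ∈ S, Adj e.1 e.2 L0 := fun e he => by
    have := hS he
    rw [show e = (e.1, e.2) from rfl, mem_edgeFinset_iff] at this
    exact this
  have key := count_bound S.card L0 (ofFn_perm_nodup π) S rfl hadjS
  rw [hL0def, List.length_ofFn] at key
  refine le_trans (Finset.card_le_card_of_injOn (fun σ => List.ofFn ⇑σ) ?_ ?_) key
  · intro σ hσ
    simp only [Finset.mem_coe, Finset.mem_filter] at hσ
    simp only [Finset.mem_coe, Finset.mem_filter, List.mem_toFinset, List.mem_permutations]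
    refine ⟨ofFn_perm_perm σ π, fun e he => ?_⟩
    have := hσ.2 he
    rw [show e = (e.1, e.2) from rfl, mem_edgeFinset_iff] at this
    exact this
  · intro σ1 _ σ2 _ heq
    exact Equiv.coe_fn_injective (List.ofFn_inj.mp heq)

end PermEdge

section MeasurePart

variable {n : ℕ}

theorem measurableSet_all (s : Set (DEdge n → Bool)) : MeasurableSet s := by
  have h : s = ⋃ ω ∈ s, {ω} := by simp
  rw [h]
  exact MeasurableSet.biUnion (Set.to_countable _) (fun ω _ => measurableSet_singleton ω)

theorem measure_event (p : ENNReal) (hp : p ≤ 1) (F : Finset (DEdge n)) :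
    digraphMeasure n p hp {ω | ∀ e ∈ F, ω e = true} = p ^ F.card := by
  classical
  have hset : {ω : DEdge n → Bool | ∀ e ∈ F, ω e = true} =
      Set.pi Set.univ (fun e => if e ∈ F then {true} else Set.univ) := by
    ext ω
    simp only [Set.mem_setOf_eq, Set.mem_pi, Set.mem_univ, true_implies]
    constructor
    · intro h e
      by_cases he : e ∈ F
      · simp [he, h e he]
      · simp [he]
    · intro h e he
      have := h e
      rw [if_pos he] at this
      simpa using this
  rw [digraphMeasure, hset, Measure.pi_pi]
  have hfac : ∀ e : DEdge n,
      (PMF.bernoulli p.toNNReal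
        (by simpa using ENNReal.toNNReal_mono ENNReal.one_ne_top hp)).toMeasure (if e ∈ F then ({true} : Set Bool) else Set.univ) =
      if e ∈ F then p else 1 := by
    intro e
    by_cases he : e ∈ F
    · rw [if_pos he, if_pos he,
        PMF.toMeasure_apply_singleton _ _ (measurableSet_singleton _)]
      exact ENNReal.coe_toNNReal (ne_top_of_le_ne_top ENNReal.one_ne_top hp)
    · rw [if_neg he, if_neg he]
      exact measure_univ
  rw [Finset.prod_congr rfl (fun e _ => hfac e), Finset.prod_ite_mem Finset.univ F (fun _ => p),
    Finset.univ_inter, Finset.prod_const]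

/-- the set of edges of `π` as a finset of `DEdge n` -/
noncomputable def pathFinset (π : Equiv.Perm (Fin n)) : Finset (DEdge n) :=
  Finset.image (pathEdge n π) Finset.univ

theorem pathEdge_injective (π : Equiv.Perm (Fin n)) : Function.Injective (pathEdge n π) := by
  intro i j h
  have h1 : π ⟨i.1, by have := i.isLt; omega⟩ = π ⟨j.1, by have := j.isLt; omega⟩ :=
    congrArg (fun e => e.val.1) h
  have h2 := congrArg Fin.val (π.injective h1)
  exact Fin.ext h2

theorem pathFinset_card (π : Equiv.Perm (Fin n)) : (pathFinset π).card = n - 1 := by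
  rw [pathFinset, Finset.card_image_of_injective _ (pathEdge_injective π), Finset.card_univ,
    Fintype.card_fin]

theorem edgeFinset_eq_image (π : Equiv.Perm (Fin n)) :
    edgeFinset n π = (pathFinset π).image Subtype.val := by
  rw [pathFinset, Finset.image_image]
  rfl

theorem edgeFinset_card (π : Equiv.Perm (Fin n)) : (edgeFinset n π).card = n - 1 := by
  rw [edgeFinset_eq_image, Finset.card_image_of_injective _ Subtype.val_injective,
    pathFinset_card]

theorem inter_card_eq (π σ : Equiv.Perm (Fin n)) :
    (pathFinset π ∩ pathFinset σ).card = (edgeFinset n π ∩ edgeFinset n σ).card := by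
  rw [edgeFinset_eq_image, edgeFinset_eq_image,
    ← Finset.image_inter _ _ Subtype.val_injective,
    Finset.card_image_of_injective _ Subtype.val_injective]

theorem hamY_eq_sum (ω : DEdge n → Bool) :
    (hamY n ω : ℝ) = ∑ π : Equiv.Perm (Fin n),
      (if ∀ i : Fin (n - 1), ω (pathEdge n π i) = true then (1 : ℝ) else 0) := by
  rw [hamY, Finset.card_filter]
  push_cast
  rfl

theorem integral_ite (p : ENNReal) (hp : p ≤ 1) (A : Set (DEdge n → Bool)) :
    ∫ ω, A.indicator (fun _ => (1 : ℝ)) ω ∂(digraphMeasure n p hp) =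
      ((digraphMeasure n p hp) A).toReal := by
  rw [MeasureTheory.integral_indicator_const (1 : ℝ) (measurableSet_all A), smul_eq_mul,
    mul_one]
  rfl

end MeasurePart

section Integrals

variable {n : ℕ}

instance digraph_prob (P : ENNReal) (hP : P ≤ 1) :
    IsProbabilityMeasure (digraphMeasure n P hP) := by
  unfold digraphMeasure
  infer_instance

theorem cond_iff_mem (π : Equiv.Perm (Fin n)) (ω : DEdge n → Bool) :
    (∀ i : Fin (n - 1), ω (pathEdge n π i) = true) ↔
      ω ∈ {ω' : DEdge n → Bool | ∀ e ∈ pathFinset π, ω' e = true} := by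
  simp only [Set.mem_setOf_eq, pathFinset, Finset.mem_image, Finset.mem_univ, true_and]
  constructor
  · rintro h e ⟨i, rfl⟩
    exact h i
  · intro h i
    exact h _ ⟨i, rfl⟩

theorem expectation_Y (p : ℝ) (hp0 : 0 ≤ p) (hP : ENNReal.ofReal p ≤ 1) :
    ∫ ω, (hamY n ω : ℝ) ∂(digraphMeasure n (ENNReal.ofReal p) hP) =
      (n.factorial : ℝ) * p ^ (n - 1) := by
  set μ := digraphMeasure n (ENNReal.ofReal p) hP with hμ
  calc ∫ ω, (hamY n ω : ℝ) ∂μ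
      = ∫ ω, (∑ π : Equiv.Perm (Fin n),
          Set.indicator {ω' : DEdge n → Bool | ∀ e ∈ pathFinset π, ω' e = true}
            (fun _ => (1 : ℝ)) ω) ∂μ := by
        congr 1
        funext ω
        rw [hamY_eq_sum]
        refine Finset.sum_congr rfl fun π _ => ?_
        rw [Set.indicator_apply]
        exact if_congr (cond_iff_mem π ω) rfl rfl
    _ = ∑ π : Equiv.Perm (Fin n), ∫ ω,
          Set.indicator {ω' : DEdge n → Bool | ∀ e ∈ pathFinset π, ω' e = true}
            (fun _ => (1 : ℝ)) ω ∂μ :=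
        MeasureTheory.integral_finset_sum _ (fun π _ => Integrable.of_finite)
    _ = ∑ π : Equiv.Perm (Fin n), p ^ (n - 1) := by
        refine Finset.sum_congr rfl fun π _ => ?_
        rw [hμ]
        refine (integral_ite (ENNReal.ofReal p) hP _).trans ?_
        rw [measure_event, pathFinset_card, ENNReal.toReal_pow,
          ENNReal.toReal_ofReal hp0]
    _ = (n.factorial : ℝ) * p ^ (n - 1) := by
        rw [Finset.sum_const, Finset.card_univ, Fintype.card_perm, Fintype.card_fin,
          nsmul_eq_mul]

set_option maxHeartbeats 1000000 in
theorem expectation_Y_sq (p : ℝ) (hp0 : 0 ≤ p) (hP : ENNReal.ofReal p ≤ 1) :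
    ∫ ω, ((hamY n ω : ℝ)) ^ 2 ∂(digraphMeasure n (ENNReal.ofReal p) hP) =
      ∑ π : Equiv.Perm (Fin n), ∑ σ : Equiv.Perm (Fin n),
        p ^ ((pathFinset π ∪ pathFinset σ).card) := by
  set μ := digraphMeasure n (ENNReal.ofReal p) hP with hμ
  calc ∫ ω, ((hamY n ω : ℝ)) ^ 2 ∂μ
      = ∫ ω, (∑ π : Equiv.Perm (Fin n), ∑ σ : Equiv.Perm (Fin n),
          Set.indicator {ω' : DEdge n → Bool |
            ∀ e ∈ pathFinset π ∪ pathFinset σ, ω' e = true} (fun _ => (1 : ℝ)) ω) ∂μ := by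
        congr 1
        funext ω
        rw [hamY_eq_sum, sq, Finset.sum_mul_sum]
        refine Finset.sum_congr rfl fun π _ => Finset.sum_congr rfl fun σ _ => ?_
        have h1 : (ω ∈ {ω' : DEdge n → Bool |
            ∀ e ∈ pathFinset π ∪ pathFinset σ, ω' e = true}) ↔
            ((∀ i : Fin (n - 1), ω (pathEdge n π i) = true) ∧
             (∀ i : Fin (n - 1), ω (pathEdge n σ i) = true)) := by
          rw [Set.mem_setOf_eq]
          simp only [Finset.mem_union]
          constructor
          · intro h
            constructor
            · exact (cond_iff_mem π ω).mpr (fun e he => h e (Or.inl he))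
            · exact (cond_iff_mem σ ω).mpr (fun e he => h e (Or.inr he))
          · rintro ⟨h1, h2⟩ e he
            rcases he with he | he
            · exact (cond_iff_mem π ω).mp h1 e he
            · exact (cond_iff_mem σ ω).mp h2 e he
        rw [Set.indicator_apply, if_congr h1 rfl rfl]
        split_ifs with h2 h3 h4 <;> simp_all
    _ = ∑ π : Equiv.Perm (Fin n), ∑ σ : Equiv.Perm (Fin n), ∫ ω,
          Set.indicator {ω' : DEdge n → Bool |
            ∀ e ∈ pathFinset π ∪ pathFinset σ, ω' e = true} (fun _ => (1 : ℝ)) ω ∂μ := by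
        rw [MeasureTheory.integral_finset_sum _ (fun π _ => Integrable.of_finite)]
        exact Finset.sum_congr rfl fun π _ =>
          MeasureTheory.integral_finset_sum _ (fun σ _ => Integrable.of_finite)
    _ = ∑ π : Equiv.Perm (Fin n), ∑ σ : Equiv.Perm (Fin n),
          p ^ ((pathFinset π ∪ pathFinset σ).card) := by
        refine Finset.sum_congr rfl fun π _ => Finset.sum_congr rfl fun σ _ => ?_
        rw [hμ]
        refine (integral_ite (ENNReal.ofReal p) hP _).trans ?_
        rw [measure_event, ENNReal.toReal_pow, ENNReal.toReal_ofReal hp0]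

end Integrals

section BoundPart

variable {n : ℕ}

open Finset

theorem nat_fact_bound {j : ℕ} (hn : 1 ≤ n) (hj : j ≤ n - 1) :
    (n - 1).choose j * j.factorial * (n - j).factorial ≤ n.factorial := by
  have e1 : n - j = (n - 1 - j) + 1 := by omega
  have e2 := Nat.choose_mul_factorial_mul_factorial hj
  calc (n - 1).choose j * j.factorial * (n - j).factorial
      = ((n - 1).choose j * j.factorial * (n - 1 - j).factorial) * ((n - 1 - j) + 1) := by
        rw [e1, Nat.factorial_succ]; ring
    _ = (n - 1).factorial * ((n - 1 - j) + 1) := by rw [e2]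
    _ ≤ (n - 1).factorial * n := Nat.mul_le_mul_left _ (by omega)
    _ = n * (n - 1).factorial := Nat.mul_comm _ _
    _ = n.factorial := Nat.mul_factorial_pred (by omega)

theorem pow_neg_eq_sum (p : ℝ) (hp0 : 0 < p) (π σ : Equiv.Perm (Fin n)) :
    p ^ (-((edgeFinset n π ∩ edgeFinset n σ).card : ℤ)) =
      ∑ T ∈ (edgeFinset n π ∩ edgeFinset n σ).powerset, (1 / p - 1) ^ T.card := by
  have hq1 : (1 / p - 1) + 1 = p⁻¹ := by rw [sub_add_cancel, one_div]
  rw [zpow_neg, zpow_natCast, ← inv_pow, ← hq1, ← Finset.prod_const]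
  rw [Finset.prod_add]
  refine Finset.sum_congr rfl fun T hT => ?_
  rw [Finset.prod_const, Finset.prod_const, one_pow, mul_one]

theorem sum_powerset_ite (p : ℝ) (hp0 : 0 < p) (π σ : Equiv.Perm (Fin n)) :
    ∑ T ∈ (edgeFinset n π ∩ edgeFinset n σ).powerset, (1 / p - 1) ^ T.card =
      ∑ T ∈ (edgeFinset n π).powerset,
        (if T ⊆ edgeFinset n σ then (1 / p - 1) ^ T.card else 0) := by
  have h1 : ∑ T ∈ (edgeFinset n π ∩ edgeFinset n σ).powerset, (1 / p - 1) ^ T.card =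
      ∑ T ∈ (edgeFinset n π ∩ edgeFinset n σ).powerset,
        (if T ⊆ edgeFinset n σ then (1 / p - 1) ^ T.card else 0) := by
    refine Finset.sum_congr rfl fun T hT => ?_
    rw [Finset.mem_powerset] at hT
    rw [if_pos (hT.trans Finset.inter_subset_right)]
  rw [h1]
  refine Finset.sum_subset (Finset.powerset_mono.mpr Finset.inter_subset_left) ?_
  intro T hT hT2
  rw [Finset.mem_powerset] at hT hT2
  rw [if_neg (fun hsub => hT2 (Finset.subset_inter hT hsub))]

theorem inner_sum_bound (hn : 2 ≤ n) (p : ℝ) (hp0 : 0 < p) (hp1 : p < 1)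
    (π : Equiv.Perm (Fin n)) :
    ∑ σ : Equiv.Perm (Fin n), p ^ (-((edgeFinset n π ∩ edgeFinset n σ).card : ℤ)) ≤
      (n.factorial : ℝ) * Real.exp (1 / p - 1) := by
  classical
  set q : ℝ := 1 / p - 1 with hqdef
  have hq : 0 ≤ q := by
    rw [hqdef, sub_nonneg]
    exact one_le_one_div hp0 hp1.le
  calc ∑ σ : Equiv.Perm (Fin n), p ^ (-((edgeFinset n π ∩ edgeFinset n σ).card : ℤ))
      = ∑ σ : Equiv.Perm (Fin n), ∑ T ∈ (edgeFinset n π).powerset,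
          (if T ⊆ edgeFinset n σ then q ^ T.card else 0) := by
        refine Finset.sum_congr rfl fun σ _ => ?_
        rw [pow_neg_eq_sum p hp0 π σ, sum_powerset_ite p hp0 π σ]
    _ = ∑ T ∈ (edgeFinset n π).powerset, ∑ σ : Equiv.Perm (Fin n),
          (if T ⊆ edgeFinset n σ then q ^ T.card else 0) := Finset.sum_comm
    _ = ∑ T ∈ (edgeFinset n π).powerset,
          ((Finset.univ.filter (fun σ : Equiv.Perm (Fin n) => T ⊆ edgeFinset n σ)).card : ℝ)
            * q ^ T.card := by
        refine Finset.sum_congr rfl fun T _ => ?_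
        rw [← Finset.sum_filter, Finset.sum_const, nsmul_eq_mul]
    _ ≤ ∑ T ∈ (edgeFinset n π).powerset, ((n - T.card).factorial : ℝ) * q ^ T.card := by
        refine Finset.sum_le_sum fun T hT => ?_
        refine mul_le_mul_of_nonneg_right ?_ (pow_nonneg hq _)
        exact_mod_cast Nat.cast_le.mpr
          (count_perm_bound π T (Finset.mem_powerset.mp hT))
    _ = ∑ j ∈ Finset.range ((n - 1) + 1), ((n - 1).choose j : ℝ) *
          (((n - j).factorial : ℝ) * q ^ j) := by
        rw [Finset.sum_powerset, edgeFinset_card]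
        refine Finset.sum_congr rfl fun j hj => ?_
        rw [Finset.sum_congr rfl (fun T hT => ?_), Finset.sum_const,
          Finset.card_powersetCard, edgeFinset_card, nsmul_eq_mul]
        rw [(Finset.mem_powersetCard.mp hT).2]
    _ ≤ ∑ j ∈ Finset.range ((n - 1) + 1), (n.factorial : ℝ) * (q ^ j / j.factorial) := by
        refine Finset.sum_le_sum fun j hj => ?_
        rw [Finset.mem_range] at hj
        have hj' : j ≤ n - 1 := by omega
        have hnat := nat_fact_bound (by omega : 1 ≤ n) hj'
        have hcast : ((n - 1).choose j : ℝ) * j.factorial * (n - j).factorial ≤ n.factorial := by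
          exact_mod_cast hnat
        have hfj : (0 : ℝ) < j.factorial := by positivity
        calc ((n - 1).choose j : ℝ) * (((n - j).factorial : ℝ) * q ^ j)
            = (((n - 1).choose j : ℝ) * (n - j).factorial) * q ^ j := by ring
          _ ≤ ((n.factorial : ℝ) / j.factorial) * q ^ j := by
              refine mul_le_mul_of_nonneg_right ?_ (pow_nonneg hq _)
              rw [le_div_iff₀ hfj]
              exact le_of_eq_of_le (by ring) hcast
          _ = (n.factorial : ℝ) * (q ^ j / j.factorial) := by ring
    _ = (n.factorial : ℝ) * ∑ j ∈ Finset.range ((n - 1) + 1), q ^ j / j.factorial := by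
        rw [Finset.mul_sum]
    _ ≤ (n.factorial : ℝ) * Real.exp q := by
        refine mul_le_mul_of_nonneg_left ?_ (by positivity)
        exact Real.sum_le_exp_of_nonneg hq _

theorem total_sum_bound (hn : 2 ≤ n) (p : ℝ) (hp0 : 0 < p) (hp1 : p < 1) :
    (∑ π : Equiv.Perm (Fin n), ∑ σ : Equiv.Perm (Fin n),
        p ^ (-((edgeFinset n π ∩ edgeFinset n σ).card : ℤ))) /
      ((n.factorial : ℝ) * (n.factorial : ℝ)) ≤ Real.exp (1 / p - 1) := by
  have hfac : (0 : ℝ) < (n.factorial : ℝ) * (n.factorial : ℝ) := by positivity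
  rw [div_le_iff₀ hfac]
  calc ∑ π : Equiv.Perm (Fin n), ∑ σ : Equiv.Perm (Fin n),
          p ^ (-((edgeFinset n π ∩ edgeFinset n σ).card : ℤ))
      ≤ ∑ _π : Equiv.Perm (Fin n), (n.factorial : ℝ) * Real.exp (1 / p - 1) :=
        Finset.sum_le_sum fun π _ => inner_sum_bound hn p hp0 hp1 π
    _ = Real.exp (1 / p - 1) * ((n.factorial : ℝ) * (n.factorial : ℝ)) := by
        rw [Finset.sum_const, Finset.card_univ, Fintype.card_perm, Fintype.card_fin,
          nsmul_eq_mul]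
        ring

end BoundPart

section FinalEq

variable {n : ℕ}

theorem moment_eq (hn : 2 ≤ n) (p : ℝ) (hp0 : 0 < p) :
    ∑ π : Equiv.Perm (Fin n), ∑ σ : Equiv.Perm (Fin n),
        p ^ ((pathFinset π ∪ pathFinset σ).card) =
      ((n.factorial : ℝ) * p ^ (n - 1)) ^ 2 *
        ((∑ π : Equiv.Perm (Fin n), ∑ σ : Equiv.Perm (Fin n),
            p ^ (-((edgeFinset n π ∩ edgeFinset n σ).card : ℤ))) /
          ((n.factorial : ℝ) * (n.factorial : ℝ))) := by
  have hfac : ((n.factorial : ℝ)) ≠ 0 := by positivity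
  set T : ℝ := ∑ π : Equiv.Perm (Fin n), ∑ σ : Equiv.Perm (Fin n),
      p ^ (-((edgeFinset n π ∩ edgeFinset n σ).card : ℤ)) with hTdef
  have hrhs : ((n.factorial : ℝ) * p ^ (n - 1)) ^ 2 *
      (T / ((n.factorial : ℝ) * (n.factorial : ℝ))) =
      p ^ (n - 1) * p ^ (n - 1) * T := by
    field_simp
  rw [hrhs, hTdef, Finset.mul_sum]
  refine Finset.sum_congr rfl fun π _ => ?_
  rw [Finset.mul_sum]
  refine Finset.sum_congr rfl fun σ _ => ?_
  have hZ := inter_card_eq π σ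
  have hcu : (pathFinset π ∪ pathFinset σ).card + (pathFinset π ∩ pathFinset σ).card =
      (n - 1) + (n - 1) := by
    rw [Finset.card_union_add_card_inter, pathFinset_card, pathFinset_card]
  have hZle : (edgeFinset n π ∩ edgeFinset n σ).card ≤ (n - 1) + (n - 1) := by omega
  have hu : (pathFinset π ∪ pathFinset σ).card =
      ((n - 1) + (n - 1)) - (edgeFinset n π ∩ edgeFinset n σ).card := by omega
  rw [zpow_neg, zpow_natCast, ← pow_add, hu]
  exact pow_sub₀ p hp0.ne' hZle

end FinalEq

/-- second moment. Fix `n ≥ 2` and `p ∈ (0,1)`, and let `Y` be the number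
of Hamiltonian paths of `G⃗(n,p)`. Then `𝔼[Y²] = (𝔼[Y])² · 𝔼[p^{−Z}]`, where
`Z = |E(π) ∩ E(σ)|` for independent uniform permutations `π, σ` of `[n]`, and
`𝔼[p^{−Z}] ≤ exp(1/p − 1)`; hence `𝔼[Y²] ≤ exp(1/p − 1)·(𝔼[Y])²`. -/
theorem stmt19 (n : ℕ) (hn : 2 ≤ n) (p : ℝ) (hp0 : 0 < p) (hp1 : p < 1) :
    (∫ ω, ((hamY n ω : ℝ)) ^ 2
        ∂(digraphMeasure n (ENNReal.ofReal p) (ENNReal.ofReal_le_one.mpr hp1.le)) =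
      (∫ ω, (hamY n ω : ℝ)
        ∂(digraphMeasure n (ENNReal.ofReal p) (ENNReal.ofReal_le_one.mpr hp1.le))) ^ 2 *
      ((∑ π : Equiv.Perm (Fin n), ∑ σ : Equiv.Perm (Fin n),
          p ^ (-((edgeFinset n π ∩ edgeFinset n σ).card : ℤ))) /
        ((n.factorial : ℝ) * (n.factorial : ℝ)))) ∧
    ((∑ π : Equiv.Perm (Fin n), ∑ σ : Equiv.Perm (Fin n),
        p ^ (-((edgeFinset n π ∩ edgeFinset n σ).card : ℤ))) /
      ((n.factorial : ℝ) * (n.factorial : ℝ)) ≤ Real.exp (1 / p - 1)) ∧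
    (∫ ω, ((hamY n ω : ℝ)) ^ 2
        ∂(digraphMeasure n (ENNReal.ofReal p) (ENNReal.ofReal_le_one.mpr hp1.le)) ≤
      Real.exp (1 / p - 1) *
        (∫ ω, (hamY n ω : ℝ)
          ∂(digraphMeasure n (ENNReal.ofReal p) (ENNReal.ofReal_le_one.mpr hp1.le))) ^ 2) := by
  have h1 : ∫ ω, ((hamY n ω : ℝ)) ^ 2
      ∂(digraphMeasure n (ENNReal.ofReal p) (ENNReal.ofReal_le_one.mpr hp1.le)) =
      (∫ ω, (hamY n ω : ℝ)
        ∂(digraphMeasure n (ENNReal.ofReal p) (ENNReal.ofReal_le_one.mpr hp1.le))) ^ 2 *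
      ((∑ π : Equiv.Perm (Fin n), ∑ σ : Equiv.Perm (Fin n),
          p ^ (-((edgeFinset n π ∩ edgeFinset n σ).card : ℤ))) /
        ((n.factorial : ℝ) * (n.factorial : ℝ))) := by
    rw [expectation_Y_sq p hp0.le _, expectation_Y p hp0.le _, moment_eq hn p hp0]
  have h2 := total_sum_bound hn p hp0 hp1
  refine ⟨h1, h2, ?_⟩
  rw [h1]
  exact le_trans (mul_le_mul_of_nonneg_left h2 (sq_nonneg _)) (le_of_eq (mul_comm _ _))
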